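/- For every $x \in \R^n$ and $1 \le j \le n$, the sum of the $j$ largest entries of $(|x_i|)$ satisfies $\sum_{k=1}^n \max\Big(\frac{|x_k|}{\sum_{i=1}^j x_i^*} - \frac{1}{j}, 0\Big) \le 1$, where $(x_i^*)$ denotes the decreasing rearrangement of $(|x_i|)$ and we assume $\sum_{i=1}^j x_i^* > 0$. -/

import Mathlib

/-- `drear x k` is the `k`-th largest entry (1-indexed) of `(|x i|)`. -/
noncomputable def drear {n : ℕ} (x : Fin n → ℝ) (k : ℕ) : ℝ :=
  ((List.ofFn fun i => |x i|).mergeSort (fun a b => decide (b ≤ a))).getD (k - 1) 0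

/-- Upper-bound half of Lemma 4.1: normalizing by the sum of the `j` largest
entries makes the Orlicz sum `∑ M_j` at most 1. -/
theorem stmt10 (n j : ℕ) (hj1 : 1 ≤ j) (hjn : j ≤ n) (x : Fin n → ℝ)
    (hpos : 0 < ∑ i ∈ Finset.range j, drear x (i + 1)) :
    ∑ k, max (|x k| / (∑ i ∈ Finset.range j, drear x (i + 1)) - 1 / (j : ℝ)) 0 ≤ 1 := by
  set l := ((List.ofFn fun i => |x i|).mergeSort (fun a b => decide (b ≤ a))) with hl
  have hperm : l.Perm (List.ofFn fun i => |x i|) := List.mergeSort_perm _ _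
  have hlen : l.length = n := by simp [hperm.length_eq]
  have hsorted : l.Pairwise (· ≥ ·) := by
    have := List.pairwise_mergeSort (le := fun a b : ℝ => decide (b ≤ a))
      (fun a b c h₁ h₂ => by simp at *; exact le_trans h₂ h₁)
      (fun a b => by simpa using le_total b a)
      (List.ofFn fun i => |x i|)
    simpa using this
  -- decreasing getD
  have hmono : ∀ a b : ℕ, a ≤ b → b < n → l.getD b 0 ≤ l.getD a 0 := by
    intro a b hab hbn
    rcases eq_or_lt_of_le hab with rfl | hab
    · exact le_refl _
    · rw [List.getD_eq_getElem _ _ (by omega : a < l.length),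
        List.getD_eq_getElem _ _ (by omega : b < l.length)]
      exact List.pairwise_iff_getElem.mp hsorted a b _ _ hab
  have hnonneg : ∀ i : ℕ, 0 ≤ l.getD i 0 := by
    intro i
    rcases lt_or_ge i l.length with h | h
    · rw [List.getD_eq_getElem _ _ h]
      have := hperm.mem_iff.mp (l.getElem_mem h)
      simp only [List.mem_ofFn] at this
      obtain ⟨k, hk⟩ := this
      rw [← hk]; positivity
    · rw [List.getD_eq_default _ _ h]
  have hd : ∀ i : ℕ, drear x (i + 1) = l.getD i 0 := by intro i; simp [drear, hl]
  set S := ∑ i ∈ Finset.range j, drear x (i + 1) with hS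
  set c := l.getD (j - 1) 0 with hc
  -- j * c ≤ S
  have hjc : (j : ℝ) * c ≤ S := by
    calc (j : ℝ) * c = ∑ _i ∈ Finset.range j, c := by simp [mul_comm]
    _ ≤ S := by
        apply Finset.sum_le_sum
        intro i hi
        rw [hd i]
        exact hmono i (j - 1) (by simp at hi; omega) (by omega)
  have hc0 : 0 ≤ c := hnonneg _
  -- sum of maxes over all k
  have hsum : ∑ k : Fin n, max (|x k| - c) 0 ≤ S - (j : ℝ) * c := by
    have h1 : ∑ k : Fin n, max (|x k| - c) 0
        = ∑ i ∈ Finset.range n, max (l.getD i 0 - c) 0 := by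
      have e1 : ∑ k : Fin n, max (|x k| - c) 0
          = ((List.ofFn fun i => |x i|).map (fun t => max (t - c) 0)).sum := by
        rw [List.map_ofFn, List.sum_ofFn]; rfl
      have e2 : ∑ i ∈ Finset.range n, max (l.getD i 0 - c) 0
          = (l.map (fun t => max (t - c) 0)).sum := by
        rw [← Fin.sum_univ_eq_sum_range]
        have : l.map (fun t => max (t - c) 0)
            = List.ofFn (fun i : Fin n => max (l.getD i 0 - c) 0) := by
          apply List.ext_getElem
          · simp [hlen]
          · intro i h1' h2'
            simp only [List.getElem_map, List.getElem_ofFn]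
            rw [List.getD_eq_getElem _ _ (by simpa [hlen] using h2')]
        rw [this, List.sum_ofFn]
      rw [e1, e2, ((hperm.map _).sum_eq)]
    rw [h1]
    have hsplit : Finset.range n = Finset.range j ∪ Finset.Ico j n := by
      rw [Finset.range_eq_Ico, ← Finset.Ico_union_Ico_eq_Ico (Nat.zero_le j) hjn, Finset.range_eq_Ico]
    rw [hsplit, Finset.sum_union (Finset.range_eq_Ico j ▸ Finset.Ico_disjoint_Ico_consecutive 0 j n)]
    have h2 : ∑ i ∈ Finset.Ico j n, max (l.getD i 0 - c) 0 = 0 := by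
      apply Finset.sum_eq_zero
      intro i hi
      simp only [Finset.mem_Ico] at hi
      have : l.getD i 0 ≤ c := hmono (j - 1) i (by omega) hi.2
      exact max_eq_right (sub_nonpos.mpr this)
    have h3 : ∑ i ∈ Finset.range j, max (l.getD i 0 - c) 0
        = ∑ i ∈ Finset.range j, (l.getD i 0 - c) := by
      apply Finset.sum_congr rfl
      intro i hi
      simp only [Finset.mem_range] at hi
      have : c ≤ l.getD i 0 := hmono i (j - 1) (by omega) (by omega)
      exact max_eq_left (sub_nonneg.mpr this)
    rw [h2, h3, Finset.sum_sub_distrib]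
    simp only [Finset.sum_const, Finset.card_range, nsmul_eq_mul]
    have : ∑ i ∈ Finset.range j, l.getD i 0 = S := by
      apply Finset.sum_congr rfl; intro i _; rw [← hd]
    linarith [this.ge, this.le]
  -- pointwise bound
  have hpt : ∀ k : Fin n, max (|x k| / S - 1 / (j : ℝ)) 0 ≤ max (|x k| - c) 0 / S := by
    intro k
    have hcS : c / S ≤ 1 / (j : ℝ) := by
      rw [div_le_div_iff₀ hpos (by positivity)]
      linarith [hjc]
    have : |x k| / S - 1 / (j : ℝ) ≤ (|x k| - c) / S := by
      rw [sub_div]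
      linarith [hcS]
    calc max (|x k| / S - 1 / (j : ℝ)) 0 ≤ max ((|x k| - c) / S) 0 :=
          max_le_max this (le_refl 0)
      _ = max (|x k| - c) 0 / S := by
          rw [← max_div_div_right hpos.le]; simp
  calc ∑ k : Fin n, max (|x k| / S - 1 / (j : ℝ)) 0
      ≤ ∑ k : Fin n, max (|x k| - c) 0 / S := Finset.sum_le_sum fun k _ => hpt k
    _ = (∑ k : Fin n, max (|x k| - c) 0) / S := by rw [Finset.sum_div]
    _ ≤ (S - (j : ℝ) * c) / S := by gcongr
    _ ≤ 1 := by
        rw [div_le_one hpos]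
        have : 0 ≤ (j : ℝ) * c := mul_nonneg (Nat.cast_nonneg j) hc0
        linarith
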